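/- For all integers k ≥ 1 and p ≥ 0, every finite nonempty set S ⊆ ℤ^k such that the subgraph of the k-dimensional mesh induced on S is connected and any two vertices of S are at graph distance at most 2p within the induced subgraph satisfies |S| ≤ f(k,p), the number of lattice points in the closed L¹-ball of radius p in ℤ^k. -/

import Mathlib

set_option maxHeartbeats 1000000

/-- `latticeBall k p` is the number of lattice points `x ∈ ℤ^k` with `∑ i, |x i| ≤ p`,
i.e. the cardinality of the closed L¹-ball `B_k(p)` centered at a lattice point. -/
noncomputable def latticeBall (k p : ℕ) : ℕ :=
  Set.ncard {x : Fin k → ℤ | ∑ i, |x i| ≤ (p : ℤ)}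

/-- The `k`-dimensional mesh: the simple graph on `ℤ^k` where two points are adjacent
iff they are at L¹-distance exactly `1`. -/
def mesh (k : ℕ) : SimpleGraph (Fin k → ℤ) where
  Adj x y := ∑ i, |x i - y i| = 1
  symm := by
    constructor
    intro x y h
    have e : ∀ i ∈ Finset.univ, |y i - x i| = |x i - y i| := fun i _ => abs_sub_comm _ _
    rw [Finset.sum_congr rfl e]
    exact h
  loopless := by
    constructor
    intro x h
    simp at h

/-! ### Counting lemmas for the ball -/

noncomputable def ballFinset (k p : ℕ) : Finset (Fin k → ℤ) :=
  (Finset.Icc (fun _ => -(p:ℤ)) (fun _ => (p:ℤ))).filter (fun x => ∑ i, |x i| ≤ (p:ℤ))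

lemma mem_ballFinset {k p : ℕ} {x : Fin k → ℤ} :
    x ∈ ballFinset k p ↔ ∑ i, |x i| ≤ (p:ℤ) := by
  constructor
  · intro h; exact (Finset.mem_filter.mp h).2
  · intro h
    refine Finset.mem_filter.mpr ⟨Finset.mem_Icc.mpr ⟨?_, ?_⟩, h⟩
    · intro i
      have : |x i| ≤ (p:ℤ) := le_trans (Finset.single_le_sum (f := fun j => |x j|)
        (fun j _ => abs_nonneg _) (Finset.mem_univ i)) h
      exact neg_le_of_abs_le this
    · intro i
      have : |x i| ≤ (p:ℤ) := le_trans (Finset.single_le_sum (f := fun j => |x j|)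
        (fun j _ => abs_nonneg _) (Finset.mem_univ i)) h
      exact le_of_abs_le this

lemma latticeBall_eq_card (k p : ℕ) : latticeBall k p = (ballFinset k p).card := by
  have : {x : Fin k → ℤ | ∑ i, |x i| ≤ (p : ℤ)} = ↑(ballFinset k p) := by
    ext x; simp [mem_ballFinset]
  rw [latticeBall, this, Set.ncard_coe_finset]

lemma latticeBall_zero (p : ℕ) : latticeBall 0 p = 1 := by
  rw [latticeBall_eq_card]
  have : ballFinset 0 p = {fun i => (0:ℤ)} := by
    ext x
    simp [mem_ballFinset]
    funext i; exact absurd i.2 (by omega)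
  simp [this]

lemma card_fiber (k p : ℕ) (t : ℤ) (ht : t.natAbs ≤ p) :
    ((ballFinset (k+1) p).filter (fun x => x (Fin.last k) = t)).card
      = (ballFinset k (p - t.natAbs)).card := by
  apply Finset.card_bij (fun x _ => Fin.init x)
  · intro a ha
    obtain ⟨hb, hlast⟩ := Finset.mem_filter.mp ha
    rw [mem_ballFinset] at hb ⊢
    rw [Fin.sum_univ_castSucc, hlast] at hb
    have habs : (t.natAbs : ℤ) = |t| := Int.natCast_natAbs t
    have : ((p - t.natAbs : ℕ) : ℤ) = (p:ℤ) - t.natAbs := by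
      push_cast [Nat.cast_sub ht]; ring
    rw [this]
    have : ∑ i : Fin k, |Fin.init a i| = ∑ i : Fin k, |a i.castSucc| := rfl
    rw [this]
    omega
  · intro a ha b hb hab
    obtain ⟨-, hal⟩ := Finset.mem_filter.mp ha
    obtain ⟨-, hbl⟩ := Finset.mem_filter.mp hb
    rw [← Fin.snoc_init_self a, ← Fin.snoc_init_self b, hal, hbl, hab]
  · intro b hb
    refine ⟨Fin.snoc b t, ?_, by simp⟩
    rw [mem_ballFinset] at hb
    refine Finset.mem_filter.mpr ⟨?_, by simp⟩
    rw [mem_ballFinset, Fin.sum_univ_castSucc]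
    have h1 : ∀ i : Fin k, (Fin.snoc b t : Fin (k+1) → ℤ) i.castSucc = b i := by
      intro i; simp
    simp only [h1, Fin.snoc_last]
    have : ((p - t.natAbs : ℕ) : ℤ) = (p:ℤ) - t.natAbs := by
      push_cast [Nat.cast_sub ht]; ring
    rw [this] at hb
    have habs : (t.natAbs : ℤ) = |t| := Int.natCast_natAbs t
    omega

lemma ball_card_succ (k p : ℕ) :
    (ballFinset (k+1) p).card
      = ∑ t ∈ Finset.Icc (-(p:ℤ)) p, (ballFinset k (p - t.natAbs)).card := by
  rw [Finset.card_eq_sum_card_fiberwise (f := fun x => x (Fin.last k))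
    (t := Finset.Icc (-(p:ℤ)) p)]
  · exact Finset.sum_congr rfl (fun t ht => by
      rw [card_fiber]
      rw [Finset.mem_Icc] at ht; omega)
  · intro x hx
    rw [Finset.mem_coe, mem_ballFinset] at hx
    have : |x (Fin.last k)| ≤ (p:ℤ) := le_trans (Finset.single_le_sum
      (f := fun j => |x j|) (fun j _ => abs_nonneg _) (Finset.mem_univ _)) hx
    rw [abs_le] at this
    rw [Finset.mem_coe, Finset.mem_Icc]
    exact this

lemma sum_natAbs_reindex (G : ℕ → ℕ) (p : ℕ) :
    ∑ t ∈ Finset.Icc (-(p:ℤ)) p, G t.natAbs = G 0 + ∑ r ∈ Finset.Icc 1 p, 2 * G r := by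
  induction p with
  | zero => simp
  | succ p ih =>
    have he : Finset.Icc (-((p:ℤ)+1)) ((p:ℤ)+1)
        = insert (-((p:ℤ)+1)) (insert ((p:ℤ)+1) (Finset.Icc (-(p:ℤ)) p)) := by
      ext t
      simp only [Finset.mem_Icc, Finset.mem_insert]
      omega
    have h1 : ((p:ℤ)+1) ∉ Finset.Icc (-(p:ℤ)) (p:ℤ) := by
      simp only [Finset.mem_Icc]; omega
    have h2 : (-((p:ℤ)+1)) ∉ insert ((p:ℤ)+1) (Finset.Icc (-(p:ℤ)) (p:ℤ)) := by
      simp only [Finset.mem_insert, Finset.mem_Icc]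
      omega
    have hr : Finset.Icc 1 (p+1) = insert (p+1) (Finset.Icc 1 p) := by
      ext r; simp [Finset.mem_Icc]; omega
    have hr1 : (p+1) ∉ Finset.Icc 1 p := by simp
    push_cast
    rw [he, Finset.sum_insert h2, Finset.sum_insert h1, hr, Finset.sum_insert hr1, ih]
    have e1 : (-((p:ℤ)+1)).natAbs = p+1 := by omega
    have e2 : (((p:ℤ)+1)).natAbs = p+1 := by omega
    rw [e1, e2]
    ring

lemma count_levels (p m : ℕ) (h : m ≤ 2*p+1) :
    m ≤ 1 + ∑ r ∈ Finset.Icc 1 p,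
      ((if 2*r ≤ m then 1 else 0) + (if 2*r+1 ≤ m then 1 else 0)) := by
  induction p with
  | zero => simpa using h
  | succ p ih =>
    have hr : Finset.Icc 1 (p+1) = insert (p+1) (Finset.Icc 1 p) := by
      ext r; simp [Finset.mem_Icc]; omega
    have hr1 : (p+1) ∉ Finset.Icc 1 p := by simp
    rw [hr, Finset.sum_insert hr1]
    rcases le_or_gt m (2*p+1) with hm | hm
    · have := ih hm
      omega
    · have hall : ∀ r ∈ Finset.Icc 1 p,
          ((if 2*r ≤ m then 1 else 0) + (if 2*r+1 ≤ m then 1 else 0)) = 2 := by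
        intro r hrr
        rw [Finset.mem_Icc] at hrr
        rw [if_pos (by omega), if_pos (by omega)]
      rw [Finset.sum_congr rfl hall, Finset.sum_const, Nat.card_Icc, smul_eq_mul]
      have h1 : (if 2*(p+1) ≤ m then (1:ℕ) else 0) = 1 := if_pos (by omega)
      rcases le_or_gt (2*(p+1)+1) m with hc | hc
      · have h2 : (if 2*(p+1)+1 ≤ m then (1:ℕ) else 0) = 1 := if_pos hc
        rw [h1, h2]; omega
      · have h2 : (if 2*(p+1)+1 ≤ m then (1:ℕ) else 0) = 0 := if_neg (by omega)
        rw [h1, h2]; omega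

lemma card_le_span (s : Finset ℤ) (hne : s.Nonempty) :
    (s.card : ℤ) ≤ s.max' hne - s.min' hne + 1 := by
  have hsub : s ⊆ Finset.Icc (s.min' hne) (s.max' hne) := fun t ht =>
    Finset.mem_Icc.mpr ⟨Finset.min'_le s t ht, Finset.le_max' s t ht⟩
  have hcard := Finset.card_le_card hsub
  rw [Int.card_Icc] at hcard
  have hmm := s.min'_le (s.max' hne) (s.max'_mem hne)
  omega

/-! ### Graph lemmas -/

lemma mesh_adj_succ {k : ℕ} {x y : Fin (k+1) → ℤ} (h : (mesh (k+1)).Adj x y) :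
    (Fin.init x = Fin.init y ∧ (x (Fin.last k) - y (Fin.last k)).natAbs = 1) ∨
    ((mesh k).Adj (Fin.init x) (Fin.init y) ∧ x (Fin.last k) = y (Fin.last k)) := by
  have h' : ∑ i : Fin (k+1), |x i - y i| = 1 := h
  rw [Fin.sum_univ_castSucc] at h'
  have hinit : ∑ i : Fin k, |Fin.init x i - Fin.init y i|
      = ∑ i : Fin k, |x i.castSucc - y i.castSucc| := rfl
  have hnn : (0:ℤ) ≤ ∑ i : Fin k, |x i.castSucc - y i.castSucc| :=
    Finset.sum_nonneg (fun i _ => abs_nonneg _)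
  have hnn2 : (0:ℤ) ≤ |x (Fin.last k) - y (Fin.last k)| := abs_nonneg _
  rcases eq_or_ne (∑ i : Fin k, |x i.castSucc - y i.castSucc|) 0 with h0 | h0
  · left
    have hall := (Finset.sum_eq_zero_iff_of_nonneg (fun i _ => abs_nonneg _)).mp h0
    constructor
    · funext i
      have := hall i (Finset.mem_univ i)
      have : x i.castSucc = y i.castSucc := by
        have := abs_eq_zero.mp this; omega
      exact this
    · have h2 : |x (Fin.last k) - y (Fin.last k)| = 1 := by omega
      have h3 := Int.natCast_natAbs (x (Fin.last k) - y (Fin.last k))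
      omega
  · right
    have hpos : (0:ℤ) < ∑ i : Fin k, |x i.castSucc - y i.castSucc| :=
      lt_of_le_of_ne hnn (Ne.symm h0)
    have h1 : ∑ i : Fin k, |x i.castSucc - y i.castSucc| = 1
        ∧ x (Fin.last k) = y (Fin.last k) := by
      constructor
      · omega
      · have : |x (Fin.last k) - y (Fin.last k)| = 0 := by omega
        have := abs_eq_zero.mp this; omega
    exact ⟨by rw [show (mesh k).Adj (Fin.init x) (Fin.init y) ↔
        (∑ i : Fin k, |Fin.init x i - Fin.init y i| = 1) from Iff.rfl, hinit]; exact h1.1, h1.2⟩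

/-- projection of a vertex of an induced subgraph of the `(k+1)`-mesh -/
def projV {k : ℕ} (T : Set (Fin (k+1) → ℤ)) (a : ↥T) : ↥(Fin.init '' T) :=
  ⟨Fin.init a.1, ⟨a.1, a.2, rfl⟩⟩

lemma walk_proj {k : ℕ} {T : Set (Fin (k+1) → ℤ)} {a b : ↥T}
    (w : ((mesh (k+1)).induce T).Walk a b) :
    ∃ w' : ((mesh k).induce (Fin.init '' T)).Walk (projV T a) (projV T b),
      w'.length + (a.1 (Fin.last k) - b.1 (Fin.last k)).natAbs ≤ w.length := by
  induction w with
  | nil => exact ⟨.nil, by simp⟩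
  | @cons u c b h w ih =>
    obtain ⟨w', hw'⟩ := ih
    have hadj : (mesh (k+1)).Adj u.1 c.1 := h
    rcases mesh_adj_succ hadj with ⟨hini, hlast⟩ | ⟨hadj', hlast⟩
    · have heq : projV T c = projV T u := by
        apply Subtype.ext
        exact hini.symm
      refine ⟨w'.copy heq rfl, ?_⟩
      rw [SimpleGraph.Walk.length_copy, SimpleGraph.Walk.length_cons]
      have htri : (u.1 (Fin.last k) - b.1 (Fin.last k)).natAbs
          ≤ (u.1 (Fin.last k) - c.1 (Fin.last k)).natAbs
            + (c.1 (Fin.last k) - b.1 (Fin.last k)).natAbs := by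
        have := Int.natAbs_add_le (u.1 (Fin.last k) - c.1 (Fin.last k))
          (c.1 (Fin.last k) - b.1 (Fin.last k))
        rw [sub_add_sub_cancel] at this
        exact this
      omega
    · have hadj'' : ((mesh k).induce (Fin.init '' T)).Adj (projV T u) (projV T c) := hadj'
      refine ⟨.cons hadj'' w', ?_⟩
      rw [SimpleGraph.Walk.length_cons, SimpleGraph.Walk.length_cons]
      rw [show u.1 (Fin.last k) = c.1 (Fin.last k) from hlast]
      omega

lemma preconn_proj {k : ℕ} {T : Set (Fin (k+1) → ℤ)}
    (hconn : ((mesh (k+1)).induce T).Connected) :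
    ((mesh k).induce (Fin.init '' T)).Connected := by
  have hne : Nonempty ↥T := hconn.nonempty
  obtain ⟨a⟩ := hne
  rw [SimpleGraph.connected_iff]
  refine ⟨fun x y => ?_, ⟨projV T a⟩⟩
  obtain ⟨u, hu, hux⟩ := x.2
  obtain ⟨v, hv, hvy⟩ := y.2
  have hx : x = projV T ⟨u, hu⟩ := Subtype.ext hux.symm
  have hy : y = projV T ⟨v, hv⟩ := Subtype.ext hvy.symm
  obtain ⟨w⟩ := hconn ⟨u, hu⟩ ⟨v, hv⟩
  obtain ⟨w', -⟩ := walk_proj w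
  rw [hx, hy]
  exact ⟨w'⟩

lemma dist_proj {k : ℕ} {T : Set (Fin (k+1) → ℤ)}
    (hconn : ((mesh (k+1)).induce T).Connected) (a b : ↥T) :
    ((mesh k).induce (Fin.init '' T)).dist (projV T a) (projV T b)
      + (a.1 (Fin.last k) - b.1 (Fin.last k)).natAbs
      ≤ ((mesh (k+1)).induce T).dist a b := by
  obtain ⟨w, hw⟩ := (hconn a b).exists_walk_length_eq_dist
  obtain ⟨w', hw'⟩ := walk_proj w
  calc _ ≤ w'.length + (a.1 (Fin.last k) - b.1 (Fin.last k)).natAbs := by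
        have := SimpleGraph.dist_le w'
        omega
    _ ≤ w.length := hw'
    _ = _ := hw

lemma walk_parity {k : ℕ} {U : Set (Fin k → ℤ)} {a b : ↥U}
    (w : ((mesh k).induce U).Walk a b) :
    (w.length : ℤ) % 2 = ((∑ i, a.1 i) - ∑ i, b.1 i) % 2 := by
  induction w with
  | nil => simp
  | @cons u c b h w ih =>
    have hadj : ∑ i, |u.1 i - c.1 i| = 1 := h
    have hpar : ((∑ i, u.1 i) - ∑ i, c.1 i) % 2 = 1 % 2 := by
      have hsub : (∑ i, u.1 i) - ∑ i, c.1 i = ∑ i, (u.1 i - c.1 i) := by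
        rw [Finset.sum_sub_distrib]
      have key : (∑ i, (u.1 i - c.1 i)) % 2 = (∑ i, |u.1 i - c.1 i|) % 2 := by
        rw [Finset.sum_int_mod, Finset.sum_int_mod (f := fun i => |u.1 i - c.1 i|)]
        congr 1
        apply Finset.sum_congr rfl
        intro i _
        rcases abs_choice (u.1 i - c.1 i) with hc | hc <;> omega
      rw [hsub, key, hadj]
    rw [SimpleGraph.Walk.length_cons]
    push_cast
    omega

/-! ### The main induction -/

theorem main_bound : ∀ (k p : ℕ) (T : Set (Fin k → ℤ)), T.Finite →
    ((mesh k).induce T).Connected →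
    ∀ (A : Set (Fin k → ℤ)) (hAT : A ⊆ T),
    (∀ u (hu : u ∈ A) v (hv : v ∈ A),
      ((mesh k).induce T).dist ⟨u, hAT hu⟩ ⟨v, hAT hv⟩ ≤ 2 * p) →
    A.ncard ≤ latticeBall k p := by
  intro k
  induction k with
  | zero =>
    intro p T hTfin hconn A hAT hdist
    have hsub : A ⊆ {(fun i => i.elim0 : Fin 0 → ℤ)} := by
      intro a _
      simp only [Set.mem_singleton_iff]
      funext i
      exact i.elim0
    calc A.ncard ≤ _ := Set.ncard_le_ncard hsub (Set.finite_singleton _)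
      _ = 1 := Set.ncard_singleton _
      _ = latticeBall 0 p := (latticeBall_zero p).symm
  | succ k IH =>
    intro p T hTfin hconn A hAT hdist
    have hT'fin : (Fin.init '' T).Finite := hTfin.image _
    have hconn' := preconn_proj hconn
    have hAfin : A.Finite := hTfin.subset hAT
    set 𝒜 : Finset (Fin (k+1) → ℤ) := hAfin.toFinset with h𝒜def
    have h𝒜 : ∀ {a}, a ∈ 𝒜 ↔ a ∈ A := fun {a} => Set.Finite.mem_toFinset hAfin
    set A' : Finset (Fin k → ℤ) := 𝒜.image Fin.init with hA'def
    have hA'T' : ∀ {x}, x ∈ A' → x ∈ Fin.init '' T := by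
      intro x hx
      obtain ⟨a, ha, rfl⟩ := Finset.mem_image.mp hx
      exact ⟨a, hAT (h𝒜.mp ha), rfl⟩
    set m : (Fin k → ℤ) → ℕ := fun x => (𝒜.filter (fun a => Fin.init a = x)).card with hmdef
    set fib : (Fin k → ℤ) → Finset ℤ :=
      fun x => (𝒜.filter (fun a => Fin.init a = x)).image (fun a => a (Fin.last k)) with hfibdef
    have hfib_mem : ∀ {x t}, t ∈ fib x →
        ∃ a, a ∈ A ∧ Fin.init a = x ∧ a (Fin.last k) = t := by
      intro x t ht
      obtain ⟨a, ha, rfl⟩ := Finset.mem_image.mp ht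
      obtain ⟨ha1, ha2⟩ := Finset.mem_filter.mp ha
      exact ⟨a, h𝒜.mp ha1, ha2, rfl⟩
    have hfib_card : ∀ x, (fib x).card = m x := by
      intro x
      apply Finset.card_image_of_injOn
      intro a ha b hb hab
      simp only [Finset.mem_coe, Finset.mem_filter] at ha hb
      rw [← Fin.snoc_init_self a, ← Fin.snoc_init_self b, ha.2, hb.2]
      exact congrArg (Fin.snoc _) hab
    have hfib_ne : ∀ {x}, x ∈ A' → (fib x).Nonempty := by
      intro x hx
      obtain ⟨a, ha, rfl⟩ := Finset.mem_image.mp hx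
      exact ⟨a (Fin.last k), Finset.mem_image_of_mem _ (Finset.mem_filter.mpr ⟨ha, rfl⟩)⟩
    -- key distance inequality
    have key : ∀ x (hx : x ∈ A') y (hy : y ∈ A'), ∀ tx ∈ fib x, ∀ ty ∈ fib y,
        (((mesh k).induce (Fin.init '' T)).dist ⟨x, hA'T' hx⟩ ⟨y, hA'T' hy⟩ : ℤ)
          + |tx - ty| ≤ 2 * p := by
      intro x hx y hy tx htx ty hty
      obtain ⟨a, haA, hax, hat⟩ := hfib_mem htx
      obtain ⟨b, hbA, hbx, hbt⟩ := hfib_mem hty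
      have hd := dist_proj hconn ⟨a, hAT haA⟩ ⟨b, hAT hbA⟩
      have hdist2 := hdist a haA b hbA
      have hproj_a : projV T ⟨a, hAT haA⟩ = (⟨x, hA'T' hx⟩ : ↥(Fin.init '' T)) :=
        Subtype.ext hax
      have hproj_b : projV T ⟨b, hAT hbA⟩ = (⟨y, hA'T' hy⟩ : ↥(Fin.init '' T)) :=
        Subtype.ext hbx
      rw [hproj_a, hproj_b] at hd
      have hcast := Int.natCast_natAbs (a (Fin.last k) - b (Fin.last k))
      rw [hat, hbt] at hcast
      have hle : ((mesh k).induce (Fin.init '' T)).dist ⟨x, hA'T' hx⟩ ⟨y, hA'T' hy⟩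
          + (a (Fin.last k) - b (Fin.last k)).natAbs ≤ 2 * p := le_trans hd hdist2
      have h2 := (Nat.cast_le (α := ℤ)).mpr hle
      push_cast at h2
      rw [hat, hbt] at h2
      omega
    -- span inequality
    have span : ∀ x (hx : x ∈ A'),
        ((m x : ℤ)) ≤ (fib x).max' (hfib_ne hx) - (fib x).min' (hfib_ne hx) + 1 := by
      intro x hx
      rw [← hfib_card x]
      exact card_le_span _ _
    -- star inequality
    have star : ∀ x (hx : x ∈ A') y (hy : y ∈ A'),
        2 * (((mesh k).induce (Fin.init '' T)).dist ⟨x, hA'T' hx⟩ ⟨y, hA'T' hy⟩ : ℤ)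
          + m x + m y ≤ 4 * p + 2 := by
      intro x hx y hy
      have h1 := key x hx y hy _ ((fib x).max'_mem (hfib_ne hx))
        _ ((fib y).min'_mem (hfib_ne hy))
      have h2 := key y hy x hx _ ((fib y).max'_mem (hfib_ne hy))
        _ ((fib x).min'_mem (hfib_ne hx))
      have hsymm : ((mesh k).induce (Fin.init '' T)).dist ⟨y, hA'T' hy⟩ ⟨x, hA'T' hx⟩
          = ((mesh k).induce (Fin.init '' T)).dist ⟨x, hA'T' hx⟩ ⟨y, hA'T' hy⟩ :=
        SimpleGraph.dist_comm
      rw [hsymm] at h2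
      have ha1 := le_abs_self ((fib x).max' (hfib_ne hx) - (fib y).min' (hfib_ne hy))
      have ha2 := le_abs_self ((fib y).max' (hfib_ne hy) - (fib x).min' (hfib_ne hx))
      have hs1 := span x hx
      have hs2 := span y hy
      omega
    -- m is bounded
    have mle : ∀ x (hx : x ∈ A'), m x ≤ 2*p+1 := by
      intro x hx
      have hst := star x hx x hx
      rw [SimpleGraph.dist_self] at hst
      push_cast at hst
      omega
    -- parity
    have parity : ∀ (x y : ↥(Fin.init '' T)),
        (∑ i, x.1 i) % 2 = (∑ i, y.1 i) % 2 →
        (((mesh k).induce (Fin.init '' T)).dist x y) % 2 = 0 := by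
      intro x y hpar
      obtain ⟨w, hw⟩ := (hconn'.preconnected x y).exists_walk_length_eq_dist
      have hp := walk_parity w
      rw [hw] at hp
      omega
    -- bound for A'
    have hA'sub : ↑A' ⊆ Fin.init '' T := fun x hx => hA'T' (Finset.mem_coe.mp hx)
    have hA'bound : A'.card ≤ latticeBall k p := by
      have hd : ∀ u (hu : u ∈ (↑A' : Set (Fin k → ℤ))) v (hv : v ∈ (↑A' : Set (Fin k → ℤ))),
          ((mesh k).induce (Fin.init '' T)).dist ⟨u, hA'sub hu⟩ ⟨v, hA'sub hv⟩ ≤ 2 * p := by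
        intro u hu v hv
        obtain ⟨tu, htu⟩ := hfib_ne (Finset.mem_coe.mp hu)
        obtain ⟨tv, htv⟩ := hfib_ne (Finset.mem_coe.mp hv)
        have hk := key u (Finset.mem_coe.mp hu) v (Finset.mem_coe.mp hv) tu htu tv htv
        have := abs_nonneg (tu - tv)
        omega
      have := IH p (Fin.init '' T) hT'fin hconn' ↑A' hA'sub hd
      rwa [Set.ncard_coe_finset] at this
    -- bound for the pair (V r, U r)
    have rbound : ∀ r ∈ Finset.Icc 1 p,
        (A'.filter (fun x => 2*r ≤ m x)).card + (A'.filter (fun x => 2*r+1 ≤ m x)).card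
          ≤ 2 * latticeBall k (p - r) := by
      intro r hr
      rw [Finset.mem_Icc] at hr
      set V := A'.filter (fun x => 2*r ≤ m x) with hV
      set U := A'.filter (fun x => 2*r+1 ≤ m x) with hU
      set P0 := V.filter (fun x => (∑ i, x i) % 2 = 0) with hP0
      set P1 := V.filter (fun x => ¬ ((∑ i, x i) % 2 = 0)) with hP1
      have hUV : U ⊆ V := by
        intro x hx
        rw [hU, Finset.mem_filter] at hx
        rw [hV, Finset.mem_filter]
        exact ⟨hx.1, by omega⟩
      have wbound : ∀ (P : Finset (Fin k → ℤ)), P ⊆ V →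
          (∀ x ∈ P, ∀ y ∈ P, (∑ i, x i) % 2 = (∑ i, y i) % 2) →
          (P ∪ U).card ≤ latticeBall k (p - r) := by
        intro P hPV hPpar
        have hWA' : ∀ {x}, x ∈ P ∪ U → x ∈ A' := by
          intro x hx
          rcases Finset.mem_union.mp hx with h | h
          · exact (Finset.mem_filter.mp (hPV h)).1
          · exact (Finset.mem_filter.mp h).1
        have hWm : ∀ {x}, x ∈ P ∪ U → 2*r ≤ m x := by
          intro x hx
          rcases Finset.mem_union.mp hx with h | h
          · exact (Finset.mem_filter.mp (hPV h)).2
          · have := (Finset.mem_filter.mp h).2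
            omega
        have hsub : ↑(P ∪ U) ⊆ Fin.init '' T := fun x hx =>
          hA'T' (hWA' (Finset.mem_coe.mp hx))
        have hd : ∀ u (hu : u ∈ (↑(P ∪ U) : Set (Fin k → ℤ)))
            v (hv : v ∈ (↑(P ∪ U) : Set (Fin k → ℤ))),
            ((mesh k).induce (Fin.init '' T)).dist ⟨u, hsub hu⟩ ⟨v, hsub hv⟩
              ≤ 2 * (p - r) := by
          intro u hu v hv
          have huW := Finset.mem_coe.mp hu
          have hvW := Finset.mem_coe.mp hv
          have huA' := hWA' huW
          have hvA' := hWA' hvW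
          have hstar := star u huA' v hvA'
          have hmu := hWm huW
          have hmv := hWm hvW
          by_cases hcase : (2*r+1 ≤ m u) ∨ (2*r+1 ≤ m v)
          · omega
          · push_neg at hcase
            have huP : u ∈ P := by
              rcases Finset.mem_union.mp huW with h | h
              · exact h
              · exact absurd (Finset.mem_filter.mp h).2 (by omega)
            have hvP : v ∈ P := by
              rcases Finset.mem_union.mp hvW with h | h
              · exact h
              · exact absurd (Finset.mem_filter.mp h).2 (by omega)
            have hpar := parity ⟨u, hsub hu⟩ ⟨v, hsub hv⟩ (hPpar u huP v hvP)
            omega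
        have := IH (p - r) (Fin.init '' T) hT'fin hconn' ↑(P ∪ U) hsub hd
        rwa [Set.ncard_coe_finset] at this
      have hpar0 : ∀ x ∈ P0, ∀ y ∈ P0, (∑ i, x i) % 2 = (∑ i, y i) % 2 := by
        intro x hx y hy
        have h1 := (Finset.mem_filter.mp hx).2
        have h2 := (Finset.mem_filter.mp hy).2
        omega
      have hpar1 : ∀ x ∈ P1, ∀ y ∈ P1, (∑ i, x i) % 2 = (∑ i, y i) % 2 := by
        intro x hx y hy
        have h1 := (Finset.mem_filter.mp hx).2
        have h2 := (Finset.mem_filter.mp hy).2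
        omega
      have b0 := wbound P0 (Finset.filter_subset _ _) hpar0
      have b1 := wbound P1 (Finset.filter_subset _ _) hpar1
      have hcards : (P0 ∪ U).card + (P1 ∪ U).card = V.card + U.card := by
        have h1 := Finset.card_union_add_card_inter (P0 ∪ U) (P1 ∪ U)
        have hsplit : P0 ∪ P1 = V := Finset.filter_union_filter_not_eq _ V
        have hu : (P0 ∪ U) ∪ (P1 ∪ U) = V := by
          have hUP : U ⊆ P0 ∪ P1 := hsplit ▸ hUV
          rw [← hsplit]
          ext x
          simp only [Finset.mem_union]
          constructor
          · rintro ((h | h) | (h | h))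
            · exact Or.inl h
            · exact Finset.mem_union.mp (hUP h)
            · exact Or.inr h
            · exact Finset.mem_union.mp (hUP h)
          · rintro (h | h)
            · exact Or.inl (Or.inl h)
            · exact Or.inr (Or.inl h)
        have hi : (P0 ∪ U) ∩ (P1 ∪ U) = U := by
          ext x
          simp only [Finset.mem_inter, Finset.mem_union, hP0, hP1, Finset.mem_filter]
          constructor
          · rintro ⟨h1 | h1, h2 | h2⟩
            · exact absurd h1.2 (by tauto)
            · exact h2
            · exact h1
            · exact h1
          · intro h
            exact ⟨Or.inr h, Or.inr h⟩
        rw [hu, hi] at h1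
        omega
      omega
    -- put it together
    have hm_le : ∀ x ∈ A', m x ≤ 1 + ∑ r ∈ Finset.Icc 1 p,
        ((if 2*r ≤ m x then 1 else 0) + (if 2*r+1 ≤ m x then 1 else 0)) :=
      fun x hx => count_levels p (m x) (mle x hx)
    calc A.ncard = 𝒜.card := Set.ncard_eq_toFinset_card A hAfin
      _ = ∑ x ∈ A', m x :=
        Finset.card_eq_sum_card_fiberwise (fun a ha => Finset.mem_image_of_mem _ ha)
      _ ≤ ∑ x ∈ A', (1 + ∑ r ∈ Finset.Icc 1 p,
          ((if 2*r ≤ m x then 1 else 0) + (if 2*r+1 ≤ m x then 1 else 0))) :=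
        Finset.sum_le_sum hm_le
      _ = A'.card + ∑ r ∈ Finset.Icc 1 p,
          ((A'.filter (fun x => 2*r ≤ m x)).card + (A'.filter (fun x => 2*r+1 ≤ m x)).card) := by
        rw [Finset.sum_add_distrib, Finset.sum_const, smul_eq_mul, mul_one]
        congr 1
        rw [Finset.sum_comm]
        apply Finset.sum_congr rfl
        intro r _
        rw [Finset.sum_add_distrib, Finset.card_filter, Finset.card_filter]
      _ ≤ latticeBall k p + ∑ r ∈ Finset.Icc 1 p, 2 * latticeBall k (p - r) :=
        add_le_add hA'bound (Finset.sum_le_sum rbound)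
      _ = latticeBall (k+1) p := by
        rw [latticeBall_eq_card (k+1) p, ball_card_succ,
          sum_natAbs_reindex (fun j => (ballFinset k (p - j)).card) p]
        simp only [Nat.sub_zero]
        rw [latticeBall_eq_card]
        congr 1
        apply Finset.sum_congr rfl
        intro r _
        rw [latticeBall_eq_card]

/-- For all `k ≥ 1` and `p ≥ 0`, every finite nonempty `S ⊆ ℤ^k` inducing
a connected subgraph of the `k`-dimensional mesh in which any two vertices are at graph
distance at most `2p` satisfies `|S| ≤ f(k,p)`. -/
theorem card_le_ball_of_even_diameter (k p : ℕ) (hk : 1 ≤ k) (S : Set (Fin k → ℤ))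
    (hfin : S.Finite) (hne : S.Nonempty)
    (hconn : ((mesh k).induce S).Connected)
    (hdiam : ∀ x, ∀ hx : x ∈ S, ∀ y, ∀ hy : y ∈ S,
      ((mesh k).induce S).dist ⟨x, hx⟩ ⟨y, hy⟩ ≤ 2 * p) :
    S.ncard ≤ latticeBall k p :=
  main_bound k p S hfin hconn S (fun _ h => h) hdiam
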